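/- Let a < b be real numbers, let α ∈ (0,1], and let ψ : [a,b] → ℂ be α-Hölder continuous. Then for every λ ∈ (a,b) the principal value p.v.∫_a^b ψ(t)/(t−λ) dt exists, i.e. the limit lim_{δ→0⁺} ∫_{[a,b]∖(λ−δ,λ+δ)} ψ(t)/(t−λ) dt exists in ℂ. -/

import Mathlib

open MeasureTheory Filter Set

/-- existence of the principal value `p.v.∫_a^b ψ(t)/(t-λ) dt` for an
α-Hölder continuous function ψ on [a,b] and λ ∈ (a,b). -/
theorem pv_exists (a b α : ℝ) (hab : a < b) (hα : α ∈ Set.Ioc (0:ℝ) 1)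
    (ψ : ℝ → ℂ) (M : ℝ) (hM : 0 ≤ M)
    (hHolder : ∀ t ∈ Set.Icc a b, ∀ t' ∈ Set.Icc a b,
      ‖ψ t - ψ t'‖ ≤ M * |t - t'| ^ α)
    (lam : ℝ) (hlam : lam ∈ Set.Ioo a b) :
    ∃ L : ℂ, Filter.Tendsto
      (fun δ : ℝ => ∫ t in Set.Icc a b \ Set.Ioo (lam - δ) (lam + δ),
        ψ t / ((t : ℂ) - (lam : ℂ)))
      (nhdsWithin 0 (Set.Ioi 0)) (nhds L) := by
  obtain ⟨hα0, hα1⟩ := hα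
  obtain ⟨hal, hlb⟩ := hlam
  set c : ℂ := ψ lam with hc
  set g : ℝ → ℂ := fun t => (ψ t - c) * ((t : ℂ) - lam)⁻¹ with hg
  have hlamIcc : lam ∈ Icc a b := ⟨hal.le, hlb.le⟩
  -- continuity of ψ on [a,b]
  have hcont : ContinuousOn ψ (Icc a b) := by
    intro t₀ ht₀
    rw [ContinuousWithinAt, tendsto_iff_dist_tendsto_zero]
    have hten : Tendsto (fun t => M * |t - t₀| ^ α) (nhdsWithin t₀ (Icc a b)) (nhds 0) := by
      have hcts : Continuous fun t : ℝ => M * |t - t₀| ^ α :=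
        continuous_const.mul ((continuous_abs.comp (continuous_id.sub continuous_const)).rpow_const
          (fun x => Or.inr hα0.le))
      have h0 : M * |t₀ - t₀| ^ α = 0 := by
        simp [Real.zero_rpow hα0.ne']
      have h2 := (hcts.tendsto t₀).mono_left (nhdsWithin_le_nhds (s := Icc a b))
      rw [h0] at h2
      exact h2
    refine squeeze_zero' (Eventually.of_forall fun t => dist_nonneg) ?_ hten
    exact eventually_nhdsWithin_of_forall fun t ht => by
      rw [dist_eq_norm]; exact hHolder t ht t₀ ht₀
  have hne : ∀ t : ℝ, t ≠ lam → ((t : ℂ) - (lam : ℂ)) ≠ 0 := by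
    intro t ht h
    exact ht (by exact_mod_cast sub_eq_zero.mp h)
  have hmeas_inv : Measurable fun t : ℝ => ((t : ℂ) - (lam : ℂ))⁻¹ :=
    (Complex.measurable_ofReal.sub measurable_const).inv
  have hgm : AEStronglyMeasurable g (volume.restrict (Icc a b)) :=
    ((hcont.aestronglyMeasurable measurableSet_Icc).sub aestronglyMeasurable_const).mul
      hmeas_inv.aestronglyMeasurable
  -- dominating function
  have hdom : IntegrableOn (fun t => M * |t - lam| ^ (α - 1)) (Icc a b) := by
    rw [← intervalIntegrable_iff_integrableOn_Icc_of_le hab.le]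
    apply IntervalIntegrable.const_mul
    have hleft : IntervalIntegrable (fun t => |t - lam| ^ (α - 1)) volume a lam := by
      have h2 : IntervalIntegrable (fun x : ℝ => x ^ (α - 1)) volume 0 (lam - a) :=
        intervalIntegral.intervalIntegrable_rpow' (by linarith)
      have h3 := h2.comp_sub_left lam
      rw [sub_zero, sub_sub_cancel] at h3
      rw [intervalIntegrable_iff] at h3 ⊢
      rw [uIoc_of_le hal.le]
      rw [uIoc_comm, uIoc_of_le hal.le] at h3
      refine h3.congr_fun (fun x hx => ?_) measurableSet_Ioc
      rw [abs_sub_comm, abs_of_nonneg (by linarith [hx.2] : (0:ℝ) ≤ lam - x)]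
    have hright : IntervalIntegrable (fun t => |t - lam| ^ (α - 1)) volume lam b := by
      have h2 : IntervalIntegrable (fun x : ℝ => x ^ (α - 1)) volume 0 (b - lam) :=
        intervalIntegral.intervalIntegrable_rpow' (by linarith)
      have h3 := h2.comp_sub_right lam
      rw [zero_add, sub_add_cancel] at h3
      rw [intervalIntegrable_iff] at h3 ⊢
      rw [uIoc_of_le hlb.le] at h3 ⊢
      refine h3.congr_fun (fun x hx => ?_) measurableSet_Ioc
      rw [abs_of_nonneg (by linarith [hx.1] : (0:ℝ) ≤ x - lam)]
    exact hleft.trans hright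
  have hg_int : IntegrableOn g (Icc a b) := by
    refine Integrable.mono' hdom hgm ?_
    rw [ae_restrict_iff' measurableSet_Icc]
    refine ae_of_all _ fun t ht => ?_
    by_cases h : t = lam
    · have h0 : g t = 0 := by simp [hg, h, ← hc]
      rw [h0, norm_zero]
      positivity
    · have habs : 0 < |t - lam| := abs_pos.2 (sub_ne_zero.2 h)
      have hnorm : ‖g t‖ = ‖ψ t - c‖ * |t - lam|⁻¹ := by
        rw [hg]
        simp only [norm_mul, norm_inv]
        congr 1
        congr 1
        rw [show ((t:ℂ) - (lam:ℂ)) = ((t - lam : ℝ) : ℂ) by push_cast; ring]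
        rw [Complex.norm_real, Real.norm_eq_abs]
      rw [hnorm]
      have hpow : |t - lam| ^ (α - 1) = |t - lam| ^ α * |t - lam|⁻¹ := by
        rw [Real.rpow_sub habs, Real.rpow_one, div_eq_mul_inv]
      rw [hpow, ← mul_assoc]
      exact mul_le_mul_of_nonneg_right (hHolder t ht lam hlamIcc) (inv_nonneg.2 (abs_nonneg _))
  -- tail integral tends to zero
  have htail : Tendsto (fun δ : ℝ => ∫ t in Ioo (lam - δ) (lam + δ) ∩ Icc a b, g t)
      (nhdsWithin 0 (Ioi 0)) (nhds 0) := by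
    have hμ : Tendsto (fun δ : ℝ => (volume.restrict (Icc a b)) (Ioo (lam - δ) (lam + δ)))
        (nhdsWithin 0 (Ioi 0)) (nhds 0) := by
      have hub : Tendsto (fun δ : ℝ => ENNReal.ofReal (2 * δ)) (nhdsWithin 0 (Ioi 0)) (nhds 0) := by
        have h1 : Tendsto (fun δ : ℝ => 2 * δ) (nhdsWithin 0 (Ioi 0)) (nhds 0) := by
          have hcts : Continuous fun δ : ℝ => 2 * δ := by continuity
          have h2 := (hcts.tendsto (0:ℝ)).mono_left (nhdsWithin_le_nhds (s := Ioi (0:ℝ)))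
          simpa using h2
        have h3 := (ENNReal.continuous_ofReal.tendsto 0).comp h1
        rw [ENNReal.ofReal_zero] at h3
        exact h3
      refine tendsto_of_tendsto_of_tendsto_of_le_of_le tendsto_const_nhds hub
        (fun δ => zero_le) (fun δ => ?_)
      calc (volume.restrict (Icc a b)) (Ioo (lam - δ) (lam + δ))
          ≤ volume (Ioo (lam - δ) (lam + δ)) := Measure.restrict_le_self _
        _ = ENNReal.ofReal (2 * δ) := by rw [Real.volume_Ioo]; ring_nf
    have := hg_int.tendsto_setIntegral_nhds_zero hμ
    refine this.congr fun δ => ?_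
    rw [Measure.restrict_restrict measurableSet_Ioo]
  -- the constant from the principal-value part
  set Kc : ℂ := ((Real.log ((b - lam) / (lam - a)) : ℝ) : ℂ) with hKc
  refine ⟨(∫ t in Icc a b, g t) + c * Kc, ?_⟩
  have hev : ∀ᶠ δ in nhdsWithin (0:ℝ) (Ioi 0),
      (∫ t in Icc a b \ Ioo (lam - δ) (lam + δ), ψ t / ((t : ℂ) - (lam : ℂ)))
      = ((∫ t in Icc a b, g t) - ∫ t in Ioo (lam - δ) (lam + δ) ∩ Icc a b, g t) + c * Kc := by
    have hmem : Ioo (0:ℝ) (min (lam - a) (b - lam)) ∈ nhdsWithin (0:ℝ) (Ioi 0) :=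
      Ioo_mem_nhdsGT_of_mem ⟨le_refl 0, lt_min (by linarith) (by linarith)⟩
    filter_upwards [hmem] with δ hδ
    obtain ⟨hδ0, hδε⟩ := hδ
    have hδ1 : δ < lam - a := lt_of_lt_of_le hδε (min_le_left _ _)
    have hδ2 : δ < b - lam := lt_of_lt_of_le hδε (min_le_right _ _)
    set S := Icc a b \ Ioo (lam - δ) (lam + δ) with hSdef
    have hS : S = Icc a (lam - δ) ∪ Icc (lam + δ) b := by
      ext t
      simp only [hSdef, mem_diff, mem_Icc, mem_Ioo, mem_union, not_and, not_lt]
      constructor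
      · rintro ⟨⟨h1, h2⟩, h3⟩
        rcases le_or_gt t (lam - δ) with h | h
        · exact Or.inl ⟨h1, h⟩
        · exact Or.inr ⟨h3 h, h2⟩
      · rintro (⟨h1, h2⟩ | ⟨h1, h2⟩)
        · exact ⟨⟨h1, by linarith⟩, fun h => by linarith⟩
        · exact ⟨⟨by linarith, h2⟩, fun h => by linarith⟩
    have hSne : ∀ t ∈ S, t ≠ lam := by
      intro t ht
      rw [hS] at ht
      rcases ht with ⟨_, h⟩ | ⟨h, _⟩ <;> · intro he; subst he; linarith
    have hSmeas : MeasurableSet S := measurableSet_Icc.diff measurableSet_Ioo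
    have hgS : IntegrableOn g S := hg_int.mono_set diff_subset
    have hcont_inv : ∀ u : Set ℝ, (∀ t ∈ u, t ≠ lam) →
        ContinuousOn (fun t : ℝ => ((t : ℂ) - (lam : ℂ))⁻¹) u := by
      intro u hu
      exact ContinuousOn.inv₀ ((Complex.continuous_ofReal.sub continuous_const).continuousOn)
        fun t ht => hne t (hu t ht)
    have hint1 : IntegrableOn (fun t : ℝ => ((t : ℂ) - (lam : ℂ))⁻¹) (Icc a (lam - δ)) :=
      ContinuousOn.integrableOn_compact isCompact_Icc
        (hcont_inv _ fun t ht => by intro he; subst he; exact absurd ht.2 (by linarith))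
    have hint2 : IntegrableOn (fun t : ℝ => ((t : ℂ) - (lam : ℂ))⁻¹) (Icc (lam + δ) b) :=
      ContinuousOn.integrableOn_compact isCompact_Icc
        (hcont_inv _ fun t ht => by intro he; subst he; exact absurd ht.1 (by linarith))
    have hinvS : IntegrableOn (fun t : ℝ => ((t : ℂ) - (lam : ℂ))⁻¹) S := by
      rw [hS]; exact hint1.union hint2
    have hsplit : (∫ t in S, ψ t / ((t : ℂ) - (lam : ℂ)))
        = (∫ t in S, g t) + ∫ t in S, c * ((t : ℂ) - (lam : ℂ))⁻¹ := by
      rw [← integral_add hgS (hinvS.const_mul c)]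
      refine setIntegral_congr_fun hSmeas fun t ht => ?_
      rw [hg]
      rw [div_eq_mul_inv, ← add_mul, sub_add_cancel]
    -- compute ∫_S g
    have hgdiff : (∫ t in S, g t)
        = (∫ t in Icc a b, g t) - ∫ t in Ioo (lam - δ) (lam + δ) ∩ Icc a b, g t := by
      have : S = Icc a b \ (Ioo (lam - δ) (lam + δ) ∩ Icc a b) := by
        rw [hSdef, diff_inter_self_eq_diff]
      rw [this, integral_diff (measurableSet_Ioo.inter measurableSet_Icc) hg_int
        inter_subset_right]
    -- compute ∫_S inv
    have hinv_eq : ∀ t : ℝ, ((t : ℂ) - (lam : ℂ))⁻¹ = (((t - lam)⁻¹ : ℝ) : ℂ) := by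
      intro t; push_cast; ring
    have hKval : (∫ t in S, ((t : ℂ) - (lam : ℂ))⁻¹) = Kc := by
      have hdisj : Disjoint (Icc a (lam - δ)) (Icc (lam + δ) b) := by
        refine Set.disjoint_left.mpr ?_
        rintro t ⟨_, h1⟩ ⟨h2, _⟩
        linarith
      rw [hS, setIntegral_union hdisj measurableSet_Icc hint1 hint2]
      have e1 : (∫ t in Icc a (lam - δ), (t - lam)⁻¹)
          = Real.log ((-δ) / (a - lam)) := by
        rw [integral_Icc_eq_integral_Ioc, ← intervalIntegral.integral_of_le (by linarith)]
        rw [_root_.intervalIntegral.integral_comp_sub_right (fun x : ℝ => x⁻¹) lam,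
          show lam - δ - lam = -δ by ring]
        exact integral_inv_of_neg (by linarith) (by linarith)
      have e2 : (∫ t in Icc (lam + δ) b, (t - lam)⁻¹)
          = Real.log ((b - lam) / δ) := by
        rw [integral_Icc_eq_integral_Ioc, ← intervalIntegral.integral_of_le (by linarith)]
        rw [_root_.intervalIntegral.integral_comp_sub_right (fun x : ℝ => x⁻¹) lam,
          show lam + δ - lam = δ by ring]
        exact integral_inv_of_pos (by linarith) (by linarith)
      have hofReal : ∀ (f : ℝ → ℝ) (s : Set ℝ),
          (∫ t in s, ((f t : ℝ) : ℂ)) = ((∫ t in s, f t : ℝ) : ℂ) := fun f s => integral_ofReal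
      simp_rw [hinv_eq]
      rw [hofReal (fun t => (t - lam)⁻¹), hofReal (fun t => (t - lam)⁻¹), e1, e2, hKc,
        ← Complex.ofReal_add]
      congr 1
      rw [show (-δ) / (a - lam) = δ / (lam - a) by rw [← neg_div_neg_eq]; ring_nf]
      rw [Real.log_div (ne_of_gt hδ0) (by linarith : lam - a ≠ 0),
        Real.log_div (by linarith : b - lam ≠ 0) (ne_of_gt hδ0),
        Real.log_div (by linarith : b - lam ≠ 0) (by linarith : lam - a ≠ 0)]
      ring
    rw [show (∫ t in Icc a b \ Ioo (lam - δ) (lam + δ), ψ t / ((t : ℂ) - (lam : ℂ)))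
        = ∫ t in S, ψ t / ((t : ℂ) - (lam : ℂ)) from rfl]
    rw [hsplit, hgdiff, integral_const_mul, hKval]
  have hlim : Tendsto (fun δ : ℝ =>
      ((∫ t in Icc a b, g t) - ∫ t in Ioo (lam - δ) (lam + δ) ∩ Icc a b, g t) + c * Kc)
      (nhdsWithin 0 (Ioi 0)) (nhds (((∫ t in Icc a b, g t) - 0) + c * Kc)) :=
    (tendsto_const_nhds.sub htail).add tendsto_const_nhds
  rw [sub_zero] at hlim
  exact hlim.congr' (by filter_upwards [hev] with δ h; exact h.symm)
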